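/- Correctness of the β-function representation of primitive recursion: Let h : ℕ → ℕ and g : ℕ → ℕ → ℕ → ℕ, and let f : ℕ → ℕ → ℕ be defined by the recursion f x 0 = h x and f x (n+1) = g x n (f x n). Then for all natural numbers x, n, y: f x n = y if and only if there exist natural numbers N and b such that N % (b+1) = h x, for every i < n one has N % ((i+2)·b + 1) = g x i (N % ((i+1)·b + 1)), and N % ((n+1)·b + 1) = y. -/

import Mathlib

theorem primrec_beta_correct (h : ℕ → ℕ) (g : ℕ → ℕ → ℕ → ℕ) (f : ℕ → ℕ → ℕ)
    (hf0 : ∀ x, f x 0 = h x)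
    (hfs : ∀ x n, f x (n + 1) = g x n (f x n)) :
    ∀ x n y : ℕ, f x n = y ↔
      ∃ N b : ℕ,
        N % (b + 1) = h x ∧
        (∀ i : ℕ, i < n →
          N % ((i + 2) * b + 1) = g x i (N % ((i + 1) * b + 1))) ∧
        N % ((n + 1) * b + 1) = y := by
  intro x n y
  constructor
  · rintro rfl
    -- choose K large
    set K : ℕ := n + 1 + (Finset.range (n + 1)).sup (f x) with hK
    set b : ℕ := K.factorial with hb
    set s : ℕ → ℕ := fun i => (i + 1) * b + 1 with hs
    have hfK : ∀ i ≤ n, f x i ≤ K := by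
      intro i hi
      calc f x i ≤ (Finset.range (n + 1)).sup (f x) :=
            Finset.le_sup (Finset.mem_range.mpr (Nat.lt_succ_of_le hi))
        _ ≤ K := by omega
    have hKb : K ≤ b := Nat.self_le_factorial K
    have hflt : ∀ i ≤ n, f x i < s i := by
      intro i hi
      have := hfK i hi
      have : f x i ≤ b := le_trans this hKb
      have hb1 : b ≤ (i + 1) * b := Nat.le_mul_of_pos_left b (by omega)
      simp only [hs]; omega
    -- pairwise coprime
    have hco : ∀ i j, i < j → j ≤ n → Nat.Coprime (s i) (s j) := by
      intro i j hij hjn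
      have hd : Nat.gcd (s i) (s j) ∣ (j - i) * b := by
        have h1 : Nat.gcd (s i) (s j) ∣ s i := Nat.gcd_dvd_left _ _
        have h2 : Nat.gcd (s i) (s j) ∣ s j := Nat.gcd_dvd_right _ _
        have hsub : s j - s i = (j - i) * b := by
          obtain ⟨d, rfl⟩ := Nat.exists_eq_add_of_lt hij
          simp only [hs]
          have e : (i + d + 1 + 1) * b = (i + 1) * b + (d + 1) * b := by ring
          have e2 : (i + d + 1 - i) = d + 1 := by omega
          rw [e2]; omega
        simpa [hsub] using Nat.dvd_sub h2 h1
      have hcb : Nat.Coprime (Nat.gcd (s i) (s j)) b := by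
        have h1 : Nat.gcd (s i) (s j) ∣ s i := Nat.gcd_dvd_left _ _
        have h2 : Nat.gcd (Nat.gcd (s i) (s j)) b ∣ 1 := by
          have ha : Nat.gcd (Nat.gcd (s i) (s j)) b ∣ (i + 1) * b + 1 :=
            dvd_trans (Nat.gcd_dvd_left _ _) h1
          have hbb : Nat.gcd (Nat.gcd (s i) (s j)) b ∣ (i + 1) * b :=
            Dvd.dvd.mul_left (Nat.gcd_dvd_right _ _) _
          simpa using (Nat.dvd_sub ha hbb)
        exact Nat.eq_one_of_dvd_one h2
      have hji : Nat.gcd (s i) (s j) ∣ (j - i) := hcb.dvd_of_dvd_mul_right hd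
      have hjib : (j - i) ∣ b := by
        apply Nat.dvd_factorial
        · omega
        · omega
      have hgb : Nat.gcd (s i) (s j) ∣ b := hji.trans hjib
      have : Nat.gcd (s i) (s j) ∣ 1 := by
        have := Nat.dvd_gcd dvd_rfl hgb
        rwa [hcb] at this
      exact Nat.eq_one_of_dvd_one this
    -- CRT
    have pairwise : (List.range (n + 1)).Pairwise (Function.onFun Nat.Coprime s) := by
      rw [List.pairwise_iff_getElem]
      intro p q hp hq hpq
      simp only [List.length_range] at hp hq
      simp only [List.getElem_range]
      exact hco p q hpq (by omega)
    obtain ⟨N, hN⟩ := Nat.chineseRemainderOfList (fun i => f x i) s (List.range (n + 1)) pairwise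
    have hNmod : ∀ i ≤ n, N % s i = f x i := by
      intro i hi
      have := hN i (List.mem_range.mpr (Nat.lt_succ_of_le hi))
      have hlt := hflt i hi
      unfold Nat.ModEq at this
      rwa [Nat.mod_eq_of_lt hlt] at this
    refine ⟨N, b, ?_, ?_, ?_⟩
    · have := hNmod 0 (Nat.zero_le _)
      simpa [hs, hf0] using this
    · intro i hi
      have h1 := hNmod i (le_of_lt hi)
      have h2 := hNmod (i + 1) hi
      simp only [hs] at h1 h2
      have : (i + 1 + 1) = i + 2 := by ring
      rw [this] at h2
      rw [h2, h1, hfs]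
    · have := hNmod n le_rfl
      simpa [hs] using this
  · rintro ⟨N, b, h0, hstep, hend⟩
    have key : ∀ i ≤ n, N % ((i + 1) * b + 1) = f x i := by
      intro i hi
      induction i with
      | zero => simpa [hf0, one_mul] using h0
      | succ k ih =>
        have hk : k ≤ n := by omega
        have := hstep k (by omega)
        rw [ih hk] at this
        rw [hfs]
        have h2 : (k + 1 + 1) = k + 2 := by ring
        rw [h2]
        exact this
    have := key n le_rfl
    omega
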